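/- Let (M, dist) be a metric space and let p = p_1, …, p_m be a curve such that dist(p_i, p_{i+1}) ≥ ℓ for every 1 ≤ i < m. Then every curve q with at most m − 1 vertices satisfies d_dF(p, q) ≥ ℓ/2. -/

import Mathlib

/-- One step of a traversal: each index advances by `0` or `1`,
and at least one of the two indices advances. -/
def FrechetStep (a b : ℕ × ℕ) : Prop :=
  (b.1 = a.1 ∨ b.1 = a.1 + 1) ∧ (b.2 = a.2 ∨ b.2 = a.2 + 1) ∧ a.1 + a.2 < b.1 + b.2

/-- `T` is a traversal of two curves with `m` resp. `k` vertices.  Indices are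
`0`-based: the vertices of the first curve are indexed `0, …, m-1` and those of
the second curve `0, …, k-1`. -/
def IsTraversal (m k : ℕ) (T : List (ℕ × ℕ)) : Prop :=
  T ≠ [] ∧ T.head? = some (0, 0) ∧ T.getLast? = some (m - 1, k - 1) ∧
    T.Chain' FrechetStep

/-- The cost of a traversal `T` of the curves `p` and `q`: the maximum of the
pairwise distances of points paired by `T`. -/
noncomputable def travCost {M : Type*} [MetricSpace M] (p q : ℕ → M)
    (T : List (ℕ × ℕ)) : ℝ :=
  (T.map fun ij => dist (p ij.1) (q ij.2)).foldr max 0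

/-- The discrete Fréchet distance between the curve with the `m` vertices
`p 0, …, p (m-1)` and the curve with the `k` vertices `q 0, …, q (k-1)`:
the minimum cost of a traversal of the two curves. -/
noncomputable def discreteFrechet {M : Type*} [MetricSpace M]
    (m : ℕ) (p : ℕ → M) (k : ℕ) (q : ℕ → M) : ℝ :=
  sInf (travCost p q '' {T | IsTraversal m k T})

private lemma le_foldr_max (l : List ℝ) {x : ℝ} (hx : x ∈ l) : x ≤ l.foldr max 0 := by
  induction l with
  | nil => simp at hx
  | cons a t ih =>
    rcases List.mem_cons.1 hx with rfl | h
    · exact le_max_left _ _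
    · exact (ih h).trans (le_max_right _ _)

private lemma mem_le_travCost {M : Type*} [MetricSpace M] (p q : ℕ → M)
    {T : List (ℕ × ℕ)} {ij : ℕ × ℕ} (h : ij ∈ T) :
    dist (p ij.1) (q ij.2) ≤ travCost p q T :=
  le_foldr_max _ (List.mem_map.2 ⟨ij, h, rfl⟩)

private lemma chain_fst_mono {T : List (ℕ × ℕ)} (hc : T.Chain' FrechetStep) :
    ∀ v (hv : v < T.length) (u : ℕ) (huv : u ≤ v),
      (T.get ⟨u, lt_of_le_of_lt huv hv⟩).1 ≤ (T.get ⟨v, hv⟩).1 := by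
  intro v
  induction v with
  | zero => intro hv u huv; interval_cases u; exact le_rfl
  | succ v ih =>
    intro hv u huv
    have hstep : FrechetStep (T.get ⟨v, by omega⟩) (T.get ⟨v + 1, hv⟩) := List.isChain_iff_getElem.1 hc v (by omega)
    have h1 : (T.get ⟨v, by omega⟩).1 ≤ (T.get ⟨v + 1, hv⟩).1 := by
      rcases hstep.1 with h | h <;> omega
    rcases Nat.lt_or_ge u (v + 1) with h | h
    · exact le_trans (ih (by omega) u (by omega)) h1
    · have : u = v + 1 := by omega
      subst this; exact le_rfl

private lemma chain_no_flat {T : List (ℕ × ℕ)} (hc : T.Chain' FrechetStep)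
    (hno : ∀ u (h : u + 1 < T.length),
      ¬ ((T.get ⟨u + 1, h⟩).1 = (T.get ⟨u, by omega⟩).1 + 1 ∧
         (T.get ⟨u + 1, h⟩).2 = (T.get ⟨u, by omega⟩).2)) :
    ∀ v (hv : v < T.length),
      (T.get ⟨v, hv⟩).1 + (T.get ⟨0, by omega⟩).2 ≤
        (T.get ⟨0, by omega⟩).1 + (T.get ⟨v, hv⟩).2 := by
  intro v
  induction v with
  | zero => intro hv; exact le_rfl
  | succ v ih =>
    intro hv
    have hstep : FrechetStep (T.get ⟨v, by omega⟩) (T.get ⟨v + 1, hv⟩) := List.isChain_iff_getElem.1 hc v (by omega)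
    have hn := hno v (by omega)
    have h1 : (T.get ⟨v + 1, hv⟩).1 + (T.get ⟨v, by omega⟩).2 ≤
        (T.get ⟨v, by omega⟩).1 + (T.get ⟨v + 1, hv⟩).2 := by
      obtain ⟨ha, hb, hcc⟩ := hstep
      rcases ha with h | h <;> rcases hb with h' | h' <;> omega
    have h2 := ih (by omega)
    omega

/-- If consecutive vertices of the curve `p` (of complexity
`m`) are at distance at least `ℓ` from each other, then every curve `q` with at
most `m − 1` vertices satisfies `d_dF(p, q) ≥ ℓ/2`. -/
theorem frechet_lower_bound_of_separated {M : Type*} [MetricSpace M]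
    (m : ℕ) (ℓ : ℝ) (p : ℕ → M)
    (hp : ∀ i, i + 1 < m → ℓ ≤ dist (p i) (p (i + 1)))
    (k : ℕ) (hk : 1 ≤ k) (hkm : k ≤ m - 1) (q : ℕ → M) :
    ℓ / 2 ≤ discreteFrechet m p k q := by
  have hm2 : 2 ≤ m := by omega
  -- an explicit traversal, for nonemptiness
  have hT0 : IsTraversal m k ((List.range (m - 1 + k)).map
      (fun i => (min i (m - 1), i - (m - 1)))) := by
    refine ⟨by simp; omega, ?_, ?_, ?_⟩
    · rw [List.head?_map]
      have : (List.range (m - 1 + k)).head? = some 0 := by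
        rw [List.head?_eq_head (by simp; omega), List.head_eq_getElem]; simp
      rw [this]
      simp
    · rw [List.getLast?_map]
      have : (List.range (m - 1 + k)).getLast? = some (m - 1 + k - 1) := by
        rw [List.getLast?_eq_getLast (by simp; omega), List.getLast_eq_getElem]; simp
      rw [this]
      simp only [Option.map_some]
      congr 1
      have h1 : (m - 1 + k - 1) ⊓ (m - 1) = m - 1 := by omega
      have h2 : m - 1 + k - 1 - (m - 1) = k - 1 := by omega
      rw [h1, h2]
    · show List.IsChain _ _
      rw [List.isChain_map, List.isChain_iff_getElem]
      intro i hi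
      simp only [List.getElem_range]
      refine ⟨?_, ?_, ?_⟩ <;> simp [FrechetStep] <;> omega
  refine le_csInf ⟨_, ⟨_, hT0, rfl⟩⟩ ?_
  rintro b ⟨T, hT, rfl⟩
  obtain ⟨hne, hhead, hlast, hchain⟩ := hT
  have hlen : 0 < T.length := List.length_pos_iff.2 hne
  have h0 : T.get ⟨0, hlen⟩ = (0, 0) := by
    rw [List.head?_eq_head hne] at hhead
    rw [List.get_eq_getElem, ← List.head_eq_getElem hne]; exact Option.some.inj hhead
  have hL : T.get ⟨T.length - 1, by omega⟩ = (m - 1, k - 1) := by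
    rw [List.getLast?_eq_getLast hne] at hlast
    rw [List.get_eq_getElem, ← List.getLast_eq_getElem hne]; exact Option.some.inj hlast
  by_cases hflat : ∃ u, ∃ h : u + 1 < T.length,
      (T.get ⟨u + 1, h⟩).1 = (T.get ⟨u, by omega⟩).1 + 1 ∧
      (T.get ⟨u + 1, h⟩).2 = (T.get ⟨u, by omega⟩).2
  · obtain ⟨u, hu, h1, h2⟩ := hflat
    set a := T.get ⟨u, by omega⟩ with ha
    set b := T.get ⟨u + 1, hu⟩ with hb
    have hbound : b.1 ≤ m - 1 := by
      have := chain_fst_mono hchain (T.length - 1) (by omega) (u + 1) (by omega)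
      rw [hL] at this
      exact this
    have him : a.1 + 1 < m := by omega
    have hd1 : dist (p a.1) (q a.2) ≤ travCost p q T :=
      mem_le_travCost p q (T.get_mem ⟨u, by omega⟩)
    have hd2 : dist (p (a.1 + 1)) (q a.2) ≤ travCost p q T := by
      have := mem_le_travCost p q (T.get_mem ⟨u + 1, hu⟩)
      rw [← hb, h1, h2] at this
      exact this
    have htri : ℓ ≤ dist (p a.1) (q a.2) + dist (p (a.1 + 1)) (q a.2) := by
      calc ℓ ≤ dist (p a.1) (p (a.1 + 1)) := hp a.1 him
        _ ≤ dist (p a.1) (q a.2) + dist (q a.2) (p (a.1 + 1)) := dist_triangle _ _ _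
        _ = dist (p a.1) (q a.2) + dist (p (a.1 + 1)) (q a.2) := by rw [dist_comm (q a.2)]
    linarith
  · push_neg at hflat
    exfalso
    have := chain_no_flat hchain (fun u h hc => hflat u h hc.1 hc.2) (T.length - 1) (by omega)
    rw [h0, hL] at this
    simp at this
    omega
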